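/- (Proposition 3.1) For any nonempty D_r ⊆ D with complement D_f = D \ D_r (taken, without loss of generality, as the first |D_f| points of D), let θ̂* and θ̂_r* denote the unique minimizers of L̂_D and L̂_{D_r} respectively. Then θ̂_r* − θ̂* = J(X)ᵀ Δα_r*, where Δα_r* ∈ ℝ^{d_out·n} has top block (1/λ) ∇_{f^lin(X_f, θ̂*)} L̂_D (indexed by the points of D_f) and bottom block −(1/λ) ( ∇_{f^lin(X_r, θ̂_r*)} L̂_{D_r} − ∇_{f^lin(X_r, θ̂*)} L̂_D ) (indexed by the points of D_r). -/

import Mathlib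

open Finset Matrix

noncomputable section

/-- Squared ℓ₂ norm of a finitely-indexed real vector. -/
def sqnorm {ι : Type*} [Fintype ι] (v : ι → ℝ) : ℝ := ∑ i, v i ^ 2

/-- The linearized model `f^lin(x, θ) = f(x, θ') + J(x)(θ - θ')`, where `f0 x = f(x, θ')`
and `J x` is the Jacobian of `f(x, ·)` at `θ'`. -/
def flin {din dout dθ : ℕ}
    (f0 : (Fin din → ℝ) → Fin dout → ℝ)
    (J : (Fin din → ℝ) → Matrix (Fin dout) (Fin dθ) ℝ)
    (θ' : Fin dθ → ℝ) (xt : Fin din → ℝ) (θ : Fin dθ → ℝ) : Fin dout → ℝ :=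
  f0 xt + J xt *ᵥ (θ - θ')

/-- Regularized empirical risk `L̂_S(θ)` of the linearized model over the subset of the
dataset indexed by `S`. -/
def empRisk {din dout dθ n : ℕ}
    (f0 : (Fin din → ℝ) → Fin dout → ℝ)
    (J : (Fin din → ℝ) → Matrix (Fin dout) (Fin dθ) ℝ)
    (θ' : Fin dθ → ℝ) (X : Fin n → Fin din → ℝ) (Y : Fin n → Fin dout → ℝ)
    (ℓ : (Fin dout → ℝ) → (Fin dout → ℝ) → ℝ) (lam : ℝ)
    (S : Finset (Fin n)) (θ : Fin dθ → ℝ) : ℝ :=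
  (S.card : ℝ)⁻¹ * ∑ i ∈ S, (ℓ (flin f0 J θ' (X i) θ) (Y i) + lam / 2 * sqnorm (θ - θ'))

/-- Gradient of the loss `ℓ(·, y)` in its first argument, as a vector. -/
def gradloss {dout : ℕ} (ℓ : (Fin dout → ℝ) → (Fin dout → ℝ) → ℝ)
    (ytgt u : Fin dout → ℝ) : Fin dout → ℝ :=
  fun a => fderiv ℝ (fun v => ℓ v ytgt) u (Pi.single a 1)

/-- Hessian of the loss `ℓ(·, y)` in its first argument, as a matrix. -/
def hessloss {dout : ℕ} (ℓ : (Fin dout → ℝ) → (Fin dout → ℝ) → ℝ)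
    (ytgt u : Fin dout → ℝ) : Fin dout → Fin dout → ℝ :=
  fun a b => fderiv ℝ (fun v => fderiv ℝ (fun w => ℓ w ytgt) v (Pi.single b 1)) u (Pi.single a 1)

/-- Stacked Jacobian `J(X) ∈ ℝ^{d_out·n × d_θ}`, whose `i`-th row block is `J(x_i)`. -/
def JX {din dout dθ n : ℕ}
    (J : (Fin din → ℝ) → Matrix (Fin dout) (Fin dθ) ℝ)
    (X : Fin n → Fin din → ℝ) : Matrix (Fin n × Fin dout) (Fin dθ) ℝ :=
  fun q p => J (X q.1) q.2 p

/-- Empirical NTK Gram matrix `K = K(X, X) = J(X) J(X)ᵀ`. -/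
def Kmat {din dout dθ n : ℕ}
    (J : (Fin din → ℝ) → Matrix (Fin dout) (Fin dθ) ℝ)
    (X : Fin n → Fin din → ℝ) : Matrix (Fin n × Fin dout) (Fin n × Fin dout) ℝ :=
  JX J X * (JX J X)ᵀ

/-- NTK row block `K(x, X) = J(x) J(X)ᵀ ∈ ℝ^{d_out × d_out·n}`. -/
def KxX {din dout dθ n : ℕ}
    (J : (Fin din → ℝ) → Matrix (Fin dout) (Fin dθ) ℝ)
    (X : Fin n → Fin din → ℝ) (xt : Fin din → ℝ) : Matrix (Fin dout) (Fin n × Fin dout) ℝ :=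
  J xt * (JX J X)ᵀ

/-- Reparameterization `φ(Δα) = θ̂* + J(X)ᵀ Δα`. -/
def phi {din dout dθ n : ℕ}
    (J : (Fin din → ℝ) → Matrix (Fin dout) (Fin dθ) ℝ)
    (X : Fin n → Fin din → ℝ) (θstar : Fin dθ → ℝ)
    (Δα : Fin n × Fin dout → ℝ) : Fin dθ → ℝ :=
  θstar + (JX J X)ᵀ *ᵥ Δα

/-- Reparameterized model `g^lin(x, Δα) = f^lin(x, θ̂*) + K(x, X) Δα`. -/
def glin {din dout dθ n : ℕ}
    (f0 : (Fin din → ℝ) → Fin dout → ℝ)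
    (J : (Fin din → ℝ) → Matrix (Fin dout) (Fin dθ) ℝ)
    (θ' : Fin dθ → ℝ) (X : Fin n → Fin din → ℝ) (θstar : Fin dθ → ℝ)
    (xt : Fin din → ℝ) (Δα : Fin n × Fin dout → ℝ) : Fin dout → ℝ :=
  flin f0 J θ' xt θstar + KxX J X xt *ᵥ Δα

/-- Dual risk `L̃_S(Δα) = (1/|S|) Σ_{(x,y)∈S} ( ℓ(g^lin(x, Δα), y) + (λ/2)‖φ(Δα) − θ'‖₂² )`. -/
def dualRisk {din dout dθ n : ℕ}
    (f0 : (Fin din → ℝ) → Fin dout → ℝ)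
    (J : (Fin din → ℝ) → Matrix (Fin dout) (Fin dθ) ℝ)
    (θ' : Fin dθ → ℝ) (X : Fin n → Fin din → ℝ) (Y : Fin n → Fin dout → ℝ)
    (ℓ : (Fin dout → ℝ) → (Fin dout → ℝ) → ℝ) (lam : ℝ) (θstar : Fin dθ → ℝ)
    (S : Finset (Fin n)) (Δα : Fin n × Fin dout → ℝ) : ℝ :=
  (S.card : ℝ)⁻¹ *
    ∑ i ∈ S, (ℓ (glin f0 J θ' X θstar (X i) Δα) (Y i) +
      lam / 2 * sqnorm (phi J X θstar Δα - θ'))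

/-- The dual coefficient vector `Δα_r*` of Proposition 3.1: on the forget indices
(`q.1 ∉ Dr`) it is `(1/λ) ∇_{f^lin(X_f, θ̂*)} L̂_D`, and on the retain indices (`q.1 ∈ Dr`)
it is `−(1/λ)( ∇_{f^lin(X_r, θ̂_r*)} L̂_{D_r} − ∇_{f^lin(X_r, θ̂*)} L̂_D )`. -/
def dalpha {din dout dθ n : ℕ}
    (f0 : (Fin din → ℝ) → Fin dout → ℝ)
    (J : (Fin din → ℝ) → Matrix (Fin dout) (Fin dθ) ℝ)
    (θ' : Fin dθ → ℝ) (X : Fin n → Fin din → ℝ) (Y : Fin n → Fin dout → ℝ)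
    (ℓ : (Fin dout → ℝ) → (Fin dout → ℝ) → ℝ) (lam : ℝ)
    (Dr : Finset (Fin n)) (θstar θrstar : Fin dθ → ℝ) :
    Fin n × Fin dout → ℝ :=
  fun q =>
    if q.1 ∈ Dr then
      -lam⁻¹ * ((Dr.card : ℝ)⁻¹ * gradloss ℓ (Y q.1) (flin f0 J θ' (X q.1) θrstar) q.2
        - (n : ℝ)⁻¹ * gradloss ℓ (Y q.1) (flin f0 J θ' (X q.1) θstar) q.2)
    else
      lam⁻¹ * ((n : ℝ)⁻¹ * gradloss ℓ (Y q.1) (flin f0 J θ' (X q.1) θstar) q.2)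

/-- Proposition 3.1: for nonempty `D_r ⊆ D`, with `θ̂*`, `θ̂_r*` the unique
minimizers of `L̂_D`, `L̂_{D_r}`, we have `θ̂_r* − θ̂* = J(X)ᵀ Δα_r*`, where `Δα_r*` has
block `(1/λ) ∇_{f^lin(X_f, θ̂*)} L̂_D` on the forget indices and block
`−(1/λ)( ∇_{f^lin(X_r, θ̂_r*)} L̂_{D_r} − ∇_{f^lin(X_r, θ̂*)} L̂_D )` on the retain indices. -/
lemma clm_apply_eq_sum {dout : ℕ} (L : (Fin dout → ℝ) →L[ℝ] ℝ) (w : Fin dout → ℝ) :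
    L w = ∑ a, w a * L (Pi.single a 1) := by
  conv_lhs => rw [← Finset.univ_sum_single w]
  rw [map_sum]
  refine Finset.sum_congr rfl fun a _ => ?_
  have h : Pi.single a (w a) = w a • (Pi.single a (1:ℝ) : Fin dout → ℝ) := by
    rw [← Pi.single_smul, smul_eq_mul, mul_one]
  rw [h, L.map_smul, smul_eq_mul]

lemma flin_line {din dout dθ : ℕ}
    (f0 : (Fin din → ℝ) → Fin dout → ℝ)
    (J : (Fin din → ℝ) → Matrix (Fin dout) (Fin dθ) ℝ)
    (θ' : Fin dθ → ℝ) (xt : Fin din → ℝ) (θ0 v : Fin dθ → ℝ) (t : ℝ) :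
    flin f0 J θ' xt (θ0 + t • v) = flin f0 J θ' xt θ0 + t • (J xt *ᵥ v) := by
  unfold flin
  rw [add_sub_right_comm, Matrix.mulVec_add, Matrix.mulVec_smul]
  abel

lemma empRisk_hasDerivAt {din dout dθ n : ℕ}
    (f0 : (Fin din → ℝ) → Fin dout → ℝ)
    (J : (Fin din → ℝ) → Matrix (Fin dout) (Fin dθ) ℝ)
    (θ' : Fin dθ → ℝ) (X : Fin n → Fin din → ℝ) (Y : Fin n → Fin dout → ℝ)
    (ℓ : (Fin dout → ℝ) → (Fin dout → ℝ) → ℝ) (lam : ℝ)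
    (hdiff : ∀ ytgt, Differentiable ℝ fun u => ℓ u ytgt)
    (S : Finset (Fin n)) (θ0 v : Fin dθ → ℝ) :
    HasDerivAt (fun t : ℝ => empRisk f0 J θ' X Y ℓ lam S (θ0 + t • v))
      ((S.card : ℝ)⁻¹ * ∑ i ∈ S,
        ((∑ a, (J (X i) *ᵥ v) a * gradloss ℓ (Y i) (flin f0 J θ' (X i) θ0) a)
          + lam / 2 * ∑ p, 2 * (θ0 p - θ' p) * v p)) 0 := by
  unfold empRisk
  refine HasDerivAt.const_mul _ (HasDerivAt.fun_sum fun i _ => HasDerivAt.add ?_ ?_)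
  · set u := flin f0 J θ' (X i) θ0 with hu
    set w := J (X i) *ᵥ v with hw
    have hc : HasDerivAt (fun t : ℝ => u + t • w) w 0 := by
      have := ((hasDerivAt_id (0:ℝ)).smul_const w).const_add u
      simpa using this
    have hF : HasFDerivAt (fun x => ℓ x (Y i)) (fderiv ℝ (fun x => ℓ x (Y i)) u)
        (u + (0:ℝ) • w) := by
      simpa using ((hdiff (Y i)) u).hasFDerivAt
    have h := hF.comp_hasDerivAt (0:ℝ) hc
    simp only [flin_line]
    convert h using 1
    · rfl
    exact (clm_apply_eq_sum _ w).symm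
  · have h : HasDerivAt (fun t : ℝ => sqnorm (θ0 + t • v - θ'))
        (∑ p, 2 * (θ0 p - θ' p) * v p) 0 := by
      have he : ∀ t : ℝ, sqnorm (θ0 + t • v - θ') = ∑ p, (θ0 p - θ' p + t * v p) ^ 2 := by
        intro t; unfold sqnorm
        refine Finset.sum_congr rfl fun p _ => ?_
        have : (θ0 + t • v - θ') p = θ0 p - θ' p + t * v p := by
          simp [Pi.add_apply, Pi.sub_apply, Pi.smul_apply, smul_eq_mul]; ring
        rw [this]
      simp only [he]
      refine HasDerivAt.fun_sum fun p _ => ?_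
      have h1 : HasDerivAt (fun t : ℝ => θ0 p - θ' p + t * v p) (v p) 0 := by
        have := ((hasDerivAt_id (0:ℝ)).mul_const (v p)).const_add (θ0 p - θ' p)
        simpa using this
      have h2 := h1.pow 2
      convert h2 using 1
      · rfl
      · rfl
      push_cast; ring
    exact h.const_mul (lam / 2)

lemma stationary {din dout dθ n : ℕ}
    (f0 : (Fin din → ℝ) → Fin dout → ℝ)
    (J : (Fin din → ℝ) → Matrix (Fin dout) (Fin dθ) ℝ)
    (θ' : Fin dθ → ℝ) (X : Fin n → Fin din → ℝ) (Y : Fin n → Fin dout → ℝ)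
    (ℓ : (Fin dout → ℝ) → (Fin dout → ℝ) → ℝ) (lam : ℝ)
    (hdiff : ∀ ytgt, Differentiable ℝ fun u => ℓ u ytgt)
    (hlam : lam ≠ 0)
    (S : Finset (Fin n)) (hS : S.Nonempty) (θ0 : Fin dθ → ℝ)
    (hmin : ∀ θ, empRisk f0 J θ' X Y ℓ lam S θ0 ≤ empRisk f0 J θ' X Y ℓ lam S θ)
    (p : Fin dθ) :
    θ0 p - θ' p = -lam⁻¹ * ((S.card : ℝ)⁻¹ *
      ∑ i ∈ S, ∑ a, J (X i) a p * gradloss ℓ (Y i) (flin f0 J θ' (X i) θ0) a) := by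
  set v : Fin dθ → ℝ := Pi.single p 1 with hv
  have hd := empRisk_hasDerivAt f0 J θ' X Y ℓ lam hdiff S θ0 v
  have hloc : IsLocalMin (fun t : ℝ => empRisk f0 J θ' X Y ℓ lam S (θ0 + t • v)) 0 :=
    Filter.Eventually.of_forall fun t => by
      simp only [zero_smul, add_zero]; exact hmin _
  have hzero := hloc.hasDerivAt_eq_zero hd
  have e1 : ∀ i, (∑ a, (J (X i) *ᵥ v) a * gradloss ℓ (Y i) (flin f0 J θ' (X i) θ0) a)
      = ∑ a, J (X i) a p * gradloss ℓ (Y i) (flin f0 J θ' (X i) θ0) a := by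
    intro i
    simp [hv, Matrix.mulVec_single]
  have e2 : (∑ q, 2 * (θ0 q - θ' q) * v q) = 2 * (θ0 p - θ' p) := by
    rw [hv]
    simp [Pi.single_apply]
  simp only [e1, e2] at hzero
  rw [Finset.sum_add_distrib, Finset.sum_const, nsmul_eq_mul] at hzero
  set T := ∑ i ∈ S, ∑ a, J (X i) a p * gradloss ℓ (Y i) (flin f0 J θ' (X i) θ0) a with hT
  clear_value T
  have hc : (S.card : ℝ) ≠ 0 := Nat.cast_ne_zero.2 hS.card_pos.ne'
  have h2 : T + (S.card : ℝ) * (lam / 2 * (2 * (θ0 p - θ' p))) = 0 := by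
    rcases mul_eq_zero.1 hzero with h | h
    · exact absurd h (inv_ne_zero hc)
    · exact h
  have h4 : (θ0 p - θ' p) * ((S.card : ℝ) * lam) = -T := by linear_combination h2
  field_simp
  linear_combination h4

theorem stmt_2 {din dout dθ n : ℕ} (hn : 0 < n)
    (f0 : (Fin din → ℝ) → Fin dout → ℝ)
    (J : (Fin din → ℝ) → Matrix (Fin dout) (Fin dθ) ℝ)
    (θ' : Fin dθ → ℝ) (X : Fin n → Fin din → ℝ) (Y : Fin n → Fin dout → ℝ)
    (ℓ : (Fin dout → ℝ) → (Fin dout → ℝ) → ℝ) (lam : ℝ)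
    (hℓ0 : ∀ u ytgt, 0 ≤ ℓ u ytgt)
    (hconv : ∀ ytgt, ConvexOn ℝ Set.univ fun u => ℓ u ytgt)
    (hdiff : ∀ ytgt, Differentiable ℝ fun u => ℓ u ytgt)
    (hlam : 0 < lam)
    (Dr : Finset (Fin n)) (hDr : Dr.Nonempty)
    (θstar θrstar : Fin dθ → ℝ)
    (hmin : ∀ θ : Fin dθ → ℝ,
      empRisk f0 J θ' X Y ℓ lam Finset.univ θstar ≤ empRisk f0 J θ' X Y ℓ lam Finset.univ θ)
    (hminr : ∀ θ : Fin dθ → ℝ,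
      empRisk f0 J θ' X Y ℓ lam Dr θrstar ≤ empRisk f0 J θ' X Y ℓ lam Dr θ) :
    θrstar - θstar = (JX J X)ᵀ *ᵥ dalpha f0 J θ' X Y ℓ lam Dr θstar θrstar := by
  have hnn : Nonempty (Fin n) := ⟨⟨0, hn⟩⟩
  have hne : (Finset.univ : Finset (Fin n)).Nonempty := Finset.univ_nonempty
  funext p
  -- abbreviations
  set gr : Fin n → Fin dout → ℝ :=
    fun i => gradloss ℓ (Y i) (flin f0 J θ' (X i) θrstar) with hgr
  set g : Fin n → Fin dout → ℝ :=
    fun i => gradloss ℓ (Y i) (flin f0 J θ' (X i) θstar) with hg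
  set A : ℝ := ∑ i ∈ Dr, ∑ a, J (X i) a p * gr i a with hA
  set B : ℝ := ∑ i ∈ Dr, ∑ a, J (X i) a p * g i a with hB
  set C : ℝ := ∑ i ∈ Drᶜ, ∑ a, J (X i) a p * g i a with hC
  have hstr := stationary f0 J θ' X Y ℓ lam hdiff hlam.ne' Dr hDr θrstar hminr p
  have hst := stationary f0 J θ' X Y ℓ lam hdiff hlam.ne' Finset.univ hne θstar hmin p
  have hcard : ((Finset.univ : Finset (Fin n)).card : ℝ) = (n : ℝ) := by simp
  have hBC : (∑ i, ∑ a, J (X i) a p * g i a) = B + C :=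
    (Finset.sum_add_sum_compl Dr _).symm
  rw [hcard, hBC] at hst
  -- LHS
  have hL : (θrstar - θstar) p
      = -lam⁻¹ * ((Dr.card : ℝ)⁻¹ * A) - (-lam⁻¹ * ((n : ℝ)⁻¹ * (B + C))) := by
    have : (θrstar - θstar) p = (θrstar p - θ' p) - (θstar p - θ' p) := by
      simp only [Pi.sub_apply]; ring
    rw [this, hstr, hst]
  rw [hL]
  -- RHS
  have hR : ((JX J X)ᵀ *ᵥ dalpha f0 J θ' X Y ℓ lam Dr θstar θrstar) p
      = ∑ i, ∑ a, J (X i) a p * dalpha f0 J θ' X Y ℓ lam Dr θstar θrstar (i, a) := by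
    simp [Matrix.mulVec, Matrix.transpose_apply, dotProduct, JX, Fintype.sum_prod_type]
  rw [hR, ← Finset.sum_add_sum_compl Dr
      (fun i => ∑ a, J (X i) a p * dalpha f0 J θ' X Y ℓ lam Dr θstar θrstar (i, a))]
  have hDrPart : (∑ i ∈ Dr, ∑ a, J (X i) a p * dalpha f0 J θ' X Y ℓ lam Dr θstar θrstar (i, a))
      = -(lam⁻¹ * (Dr.card : ℝ)⁻¹) * A + (lam⁻¹ * (n : ℝ)⁻¹) * B := by
    have step : ∀ i ∈ Dr, (∑ a, J (X i) a p * dalpha f0 J θ' X Y ℓ lam Dr θstar θrstar (i, a))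
        = -(lam⁻¹ * (Dr.card : ℝ)⁻¹) * (∑ a, J (X i) a p * gr i a)
          + (lam⁻¹ * (n : ℝ)⁻¹) * (∑ a, J (X i) a p * g i a) := by
      intro i hi
      rw [Finset.mul_sum, Finset.mul_sum, ← Finset.sum_add_distrib]
      refine Finset.sum_congr rfl fun a _ => ?_
      simp only [dalpha, hi, if_true]
      ring
    rw [Finset.sum_congr rfl step, Finset.sum_add_distrib, ← Finset.mul_sum, ← Finset.mul_sum]
  have hCoPart : (∑ i ∈ Drᶜ, ∑ a, J (X i) a p * dalpha f0 J θ' X Y ℓ lam Dr θstar θrstar (i, a))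
      = (lam⁻¹ * (n : ℝ)⁻¹) * C := by
    have step : ∀ i ∈ Drᶜ, (∑ a, J (X i) a p * dalpha f0 J θ' X Y ℓ lam Dr θstar θrstar (i, a))
        = (lam⁻¹ * (n : ℝ)⁻¹) * (∑ a, J (X i) a p * g i a) := by
      intro i hi
      rw [Finset.mul_sum]
      refine Finset.sum_congr rfl fun a _ => ?_
      have hni : i ∉ Dr := Finset.mem_compl.mp hi
      simp only [dalpha, hni, if_false]
      ring
    rw [Finset.sum_congr rfl step, ← Finset.mul_sum]
  rw [hDrPart, hCoPart]
  ring
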